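/- Suppose the Duplicator has a winning strategy in the existential k-pebble game from I to I'. Then every Boolean Datalog query all of whose rule bodies have at most k variables that holds on I also holds on I'. Consequently, if for infinitely many k there are instances I_k, I'_k with Q(I_k) = True, Q(I'_k) = False, and I_k →_k I'_k, then the Boolean query Q is not definable in Datalog. -/

import Mathlib

namespace MonDet

/-- A fact over schema `σ` with arities `ar`, with elements from domain `D`. -/
abbrev RFact (σ : Type) (ar : σ → ℕ) (D : Type) := Σ R : σ, Fin (ar R) → D

/-- A Datalog rule over an extensional schema `(σe, are)` and an intensional
schema `(σi, ari)`: a head IDB atom and a body consisting of extensional and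
intensional atoms over the rule's variables. -/
structure DRule {σe σi : Type} (are : σe → ℕ) (ari : σi → ℕ) where
  Var : Type
  headP : σi
  headVars : Fin (ari headP) → Var
  bodyE : Set (Σ R : σe, Fin (are R) → Var)
  bodyI : Set (Σ P : σi, Fin (ari P) → Var)

/-- A set `J` of IDB facts is closed under the rules of `Π` on the EDB instance
`I`. -/
def Closed {σe σi D : Type} (are : σe → ℕ) (ari : σi → ℕ)
    (Prog : Set (DRule are ari)) (I : Set (RFact σe are D))
    (J : Set (RFact σi ari D)) : Prop :=
  ∀ ρ ∈ Prog, ∀ η : ρ.Var → D,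
    (∀ a ∈ ρ.bodyE, (⟨a.1, η ∘ a.2⟩ : RFact σe are D) ∈ I) →
    (∀ a ∈ ρ.bodyI, (⟨a.1, η ∘ a.2⟩ : RFact σi ari D) ∈ J) →
    (⟨ρ.headP, η ∘ ρ.headVars⟩ : RFact σi ari D) ∈ J

/-- The least fixpoint of the Datalog program `Π` on the EDB instance `I`: the
least set of IDB facts closed under the rules. -/
def FixPt {σe σi D : Type} (are : σe → ℕ) (ari : σi → ℕ)
    (Prog : Set (DRule are ari)) (I : Set (RFact σe are D)) :
    Set (RFact σi ari D) :=
  ⋂₀ {J | Closed are ari Prog I J}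

/-- Domain of a partial map, represented as a function into `Option`. -/
def pdom {D D' : Type} (f : D → Option D') : Set D := {a | f a ≠ none}

/-- `f` is a partial homomorphism from `I` to `I'`. -/
def PartialHom {σ D D' : Type} (ar : σ → ℕ)
    (I : Set (RFact σ ar D)) (I' : Set (RFact σ ar D'))
    (f : D → Option D') : Prop :=
  ∀ (R : σ) (t : Fin (ar R) → D), (⟨R, t⟩ : RFact σ ar D) ∈ I →
    (∀ i, t i ∈ pdom f) →
    ∃ t' : Fin (ar R) → D', (∀ i, f (t i) = some (t' i)) ∧
      (⟨R, t'⟩ : RFact σ ar D') ∈ I'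

/-- The Duplicator has a winning strategy in the existential `k`-pebble game. -/
def WinningStrategy {σ D D' : Type} (ar : σ → ℕ) (k : ℕ)
    (I : Set (RFact σ ar D)) (I' : Set (RFact σ ar D')) : Prop :=
  ∃ H : Set (D → Option D'), H.Nonempty ∧
    (∀ f ∈ H, PartialHom ar I I' f ∧ (pdom f).Finite ∧ (pdom f).ncard ≤ k) ∧
    (∀ f ∈ H, ∀ g : D → Option D', (∀ a, g a = none ∨ g a = f a) → g ∈ H) ∧
    (∀ f ∈ H, (pdom f).ncard < k → ∀ a : D,
      ∃ g ∈ H, (∀ b ∈ pdom f, g b = f b) ∧ a ∈ pdom g)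

section Aux

open Classical in
/-- Cover lemma: any small enough finite set can be added to the domain of a
strategy map. -/
lemma cover_lemma {σ D D' : Type} {ar : σ → ℕ} {k : ℕ}
    {I : Set (RFact σ ar D)} {I' : Set (RFact σ ar D')}
    {H : Set (D → Option D')}
    (hmem : ∀ f ∈ H, PartialHom ar I I' f ∧ (pdom f).Finite ∧ (pdom f).ncard ≤ k)
    (hres : ∀ f ∈ H, ∀ g : D → Option D', (∀ a, g a = none ∨ g a = f a) → g ∈ H)
    (hext : ∀ f ∈ H, (pdom f).ncard < k → ∀ a : D,
      ∃ g ∈ H, (∀ b ∈ pdom f, g b = f b) ∧ a ∈ pdom g)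
    {S : Set D} (hS : S.Finite) :
    ∀ f ∈ H, (pdom f ∪ S).ncard ≤ k →
      ∃ g ∈ H, (∀ b ∈ pdom f, g b = f b) ∧ pdom f ∪ S ⊆ pdom g ∧
        pdom g ⊆ pdom f ∪ S := by
  refine Set.Finite.induction_on
    (motive := fun S _ => ∀ f ∈ H, (pdom f ∪ S).ncard ≤ k →
      ∃ g ∈ H, (∀ b ∈ pdom f, g b = f b) ∧ pdom f ∪ S ⊆ pdom g ∧
        pdom g ⊆ pdom f ∪ S) S hS ?_ ?_
  · intro f hf _
    exact ⟨f, hf, fun b _ => rfl, by simp, by simp⟩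
  · intro a S' haS' hS' ih f hf hcard
    have hfS'fin : (pdom f ∪ S').Finite := ((hmem f hf).2.1).union hS'
    have hfSfin : (pdom f ∪ insert a S').Finite :=
      ((hmem f hf).2.1).union (hS'.insert a)
    have hsub : pdom f ∪ S' ⊆ pdom f ∪ insert a S' :=
      Set.union_subset_union_right _ (Set.subset_insert a S')
    obtain ⟨g, hgH, hag, hcov, hsubg⟩ := ih f hf
      (le_trans (Set.ncard_le_ncard hsub hfSfin) hcard)
    by_cases hag' : a ∈ pdom g
    · refine ⟨g, hgH, hag, ?_, hsubg.trans hsub⟩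
      intro b hb
      rcases hb with hb | hb
      · exact hcov (Or.inl hb)
      · rcases hb with rfl | hb
        · exact hag'
        · exact hcov (Or.inr hb)
    · have hss : pdom g ⊂ pdom f ∪ insert a S' := by
        refine ⟨hsubg.trans hsub, fun hcon => hag' (hcon (Or.inr (Set.mem_insert a S')))⟩
      have hlt : (pdom g).ncard < k :=
        lt_of_lt_of_le (Set.ncard_lt_ncard hss hfSfin) hcard
      obtain ⟨h, hhH, hagh, hah⟩ := hext g hgH hlt a
      set h' : D → Option D' := fun b => if b = a ∨ b ∈ pdom g then h b else none with hh'
      have hh'H : h' ∈ H := by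
        refine hres h hhH h' (fun b => ?_)
        by_cases hb : b = a ∨ b ∈ pdom g <;> simp [hh', hb]
      have hgh' : ∀ b ∈ pdom g, h' b = g b := by
        intro b hb
        simp only [hh', if_pos (Or.inr hb)]
        exact hagh b hb
      refine ⟨h', hh'H, ?_, ?_, ?_⟩
      · intro b hb
        have hbg : b ∈ pdom g := hcov (Or.inl hb)
        rw [hgh' b hbg, hag b hb]
      · intro b hb
        have : b = a ∨ b ∈ pdom g := by
          rcases hb with hb | hb
          · exact Or.inr (hcov (Or.inl hb))
          · rcases hb with rfl | hb
            · exact Or.inl rfl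
            · exact Or.inr (hcov (Or.inr hb))
        rcases this with rfl | hbg
        · simpa [pdom, hh', hagh] using hah
        · simpa [pdom, hgh' b hbg] using hbg
      · intro b hb
        by_cases hba : b = a ∨ b ∈ pdom g
        · rcases hba with rfl | hbg
          · exact Or.inr (Set.mem_insert b S')
          · exact hsub (hsubg hbg)
        · exfalso
          apply hb
          simp [hh', hba]

/-- The fixpoint is itself closed under the rules. -/
lemma fixpt_closed {σe σi D : Type} (are : σe → ℕ) (ari : σi → ℕ)
    (Prog : Set (DRule are ari)) (I : Set (RFact σe are D)) :
    Closed are ari Prog I (FixPt are ari Prog I) := by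
  intro ρ hρ η hE hI J hJ
  exact hJ ρ hρ η hE (fun a ha => (hI a ha) J hJ)

end Aux

open Classical in
/-- Part (1) as a standalone lemma. -/
lemma preservation {σe D : Type} (are : σe → ℕ)
    (σi : Type) (ari : σi → ℕ) (Prog : Set (DRule are ari)) (Goal : σi)
    (k : ℕ) (I I' : Set (RFact σe are D))
    (hvars : ∀ ρ ∈ Prog, Finite ρ.Var ∧ Nat.card ρ.Var ≤ k)
    (hws : WinningStrategy are k I I')
    (hgoal : ∃ c, (⟨Goal, c⟩ : RFact σi ari D) ∈ FixPt are ari Prog I) :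
    ∃ c, (⟨Goal, c⟩ : RFact σi ari D) ∈ FixPt are ari Prog I' := by
  obtain ⟨H, ⟨f0, hf0⟩, hmem, hres, hext⟩ := hws
  -- the transfer set J
  set J : Set (RFact σi ari D) :=
    {p | (Set.range p.2).ncard ≤ k ∧ ∀ f ∈ H, ∀ t' : Fin (ari p.1) → D,
      (∀ i, f (p.2 i) = some (t' i)) →
        (⟨p.1, t'⟩ : RFact σi ari D) ∈ FixPt are ari Prog I'} with hJ
  have hclosed : Closed are ari Prog I J := by
    intro ρ hρ η hE hI
    have hfinV : Finite ρ.Var := (hvars ρ hρ).1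
    have hrange_card : (Set.range η).ncard ≤ k := by
      rw [← Nat.card_coe_set_eq]
      exact le_trans (Finite.card_range_le η) (hvars ρ hρ).2
    have hrfin : (Set.range η).Finite := Set.finite_range η
    have hhead_sub : Set.range (η ∘ ρ.headVars) ⊆ Set.range η :=
      Set.range_comp_subset_range _ _
    refine ⟨le_trans (Set.ncard_le_ncard hhead_sub hrfin) hrange_card, ?_⟩
    intro f hfH t' ht'
    -- restrict f to the head range
    set T := Set.range (η ∘ ρ.headVars) with hT
    set f1 : D → Option D := fun b => if b ∈ T then f b else none with hf1
    have hf1H : f1 ∈ H := by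
      refine hres f hfH f1 (fun b => ?_)
      by_cases hb : b ∈ T <;> simp [hf1, hb]
    have hpd1 : pdom f1 ⊆ T := by
      intro b hb
      by_contra hbT
      exact hb (by simp [hf1, hbT])
    have hf1T : ∀ i, f1 (η (ρ.headVars i)) = some (t' i) := by
      intro i
      show (if η (ρ.headVars i) ∈ T then f (η (ρ.headVars i)) else none) = some (t' i)
      rw [if_pos (show η (ρ.headVars i) ∈ T from ⟨i, rfl⟩)]
      exact ht' i
    have hcard1 : (pdom f1 ∪ Set.range η).ncard ≤ k := by
      have : pdom f1 ∪ Set.range η ⊆ Set.range η :=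
        Set.union_subset (hpd1.trans hhead_sub) subset_rfl
      exact le_trans (Set.ncard_le_ncard this hrfin) hrange_card
    obtain ⟨g, hgH, hag, hcov, _⟩ :=
      cover_lemma hmem hres hext hrfin f1 hf1H hcard1
    have hgdef : ∀ v : ρ.Var, (g (η v)).isSome := by
      intro v
      exact Option.ne_none_iff_isSome.mp (hcov (Or.inr (Set.mem_range_self v)))
    set η' : ρ.Var → D := fun v => (g (η v)).get (hgdef v) with hη'
    have hgη' : ∀ v, g (η v) = some (η' v) := fun v => (Option.some_get (hgdef v)).symm
    -- extensional body atoms transfer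
    have hE' : ∀ a ∈ ρ.bodyE, (⟨a.1, η' ∘ a.2⟩ : RFact σe are D) ∈ I' := by
      intro a ha
      obtain ⟨t'', ht'', hI''⟩ := (hmem g hgH).1 a.1 (η ∘ a.2) (hE a ha)
        (fun i => hcov (Or.inr (Set.mem_range_self (a.2 i))))
      have : t'' = η' ∘ a.2 := by
        funext i
        have h1 := ht'' i
        have h2 := hgη' (a.2 i)
        simp only [Function.comp_apply] at h1 ⊢
        exact Option.some.inj (h1.symm.trans h2)
      rwa [this] at hI''
    -- intensional body atoms transfer
    have hI' : ∀ a ∈ ρ.bodyI, (⟨a.1, η' ∘ a.2⟩ : RFact σi ari D) ∈ FixPt are ari Prog I' := by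
      intro a ha
      exact (hI a ha).2 g hgH (η' ∘ a.2) (fun i => hgη' (a.2 i))
    have hhead : (⟨ρ.headP, η' ∘ ρ.headVars⟩ : RFact σi ari D) ∈ FixPt are ari Prog I' :=
      fixpt_closed are ari Prog I' ρ hρ η' hE' hI'
    have : t' = η' ∘ ρ.headVars := by
      funext i
      have h1 : f1 (η (ρ.headVars i)) = some (t' i) := hf1T i
      have hmemT : η (ρ.headVars i) ∈ pdom f1 := by
        simp [pdom, h1]
      have h2 : g (η (ρ.headVars i)) = some (t' i) := (hag _ hmemT).trans h1
      have h3 := hgη' (ρ.headVars i)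
      exact Option.some.inj (h2.symm.trans h3)
    rwa [this]
  have hsub : FixPt are ari Prog I ⊆ J := Set.sInter_subset_of_mem hclosed
  obtain ⟨c, hc⟩ := hgoal
  obtain ⟨hcard, hprop⟩ := hsub hc
  -- the empty map is in H
  have hemp : (fun _ => (none : Option D)) ∈ H :=
    hres f0 hf0 _ (fun a => Or.inl rfl)
  have hpde : pdom (fun _ => (none : Option D)) = (∅ : Set (D)) := by
    ext b; simp [pdom]
  obtain ⟨g, hgH, _, hcov, _⟩ := cover_lemma hmem hres hext (Set.finite_range c)
    _ hemp (by rw [hpde, Set.empty_union]; exact hcard)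
  have hdef : ∀ i, (g (c i)).isSome := fun i =>
    Option.ne_none_iff_isSome.mp (hcov (Or.inr (Set.mem_range_self i)))
  exact ⟨fun i => (g (c i)).get (hdef i),
    hprop g hgH _ (fun i => (Option.some_get (hdef i)).symm)⟩

/-- (1) If the Duplicator has a winning strategy in the existential
`k`-pebble game from `I` to `I'`, then every Boolean Datalog query all of whose
rule bodies have at most `k` variables that holds on `I` also holds on `I'`.
(2) Consequently, if for infinitely many `k` there are instances `I_k, I'_k` with
`Q(I_k) = True`, `Q(I'_k) = False` and `I_k →_k I'_k`, then the Boolean query `Q`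
is not definable in Datalog (by a finite program with finitely many variables per
rule and nullary goal predicate). -/
theorem pebble_preservation_and_datalog_undefinability
    {σe D : Type} (are : σe → ℕ) :
    (∀ (σi : Type) (ari : σi → ℕ) (Prog : Set (DRule are ari)) (Goal : σi)
        (k : ℕ) (I I' : Set (RFact σe are D)),
      (∀ ρ ∈ Prog, Finite ρ.Var ∧ Nat.card ρ.Var ≤ k) →
      WinningStrategy are k I I' →
      (∃ c, (⟨Goal, c⟩ : RFact σi ari D) ∈ FixPt are ari Prog I) →
      (∃ c, (⟨Goal, c⟩ : RFact σi ari D) ∈ FixPt are ari Prog I')) ∧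
    (∀ Q : Set (RFact σe are D) → Prop,
      (∀ k : ℕ, ∃ k' ≥ k, ∃ I I' : Set (RFact σe are D),
        Q I ∧ ¬ Q I' ∧ WinningStrategy are k' I I') →
      ¬ ∃ (σi : Type) (ari : σi → ℕ) (Prog : Set (DRule are ari)) (Goal : σi),
          Prog.Finite ∧ (∀ ρ ∈ Prog, Finite ρ.Var) ∧ ari Goal = 0 ∧
          ∀ I : Set (RFact σe are D),
            Q I ↔ ∃ c, (⟨Goal, c⟩ : RFact σi ari D) ∈ FixPt are ari Prog I) := by
  refine ⟨fun σi ari Prog Goal k I I' hvars hws hgoal =>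
    preservation are σi ari Prog Goal k I I' hvars hws hgoal, ?_⟩
  rintro Q hinf ⟨σi, ari, Prog, Goal, hfin, hfv, har0, hdef⟩
  obtain ⟨k, hk⟩ := (hfin.image (fun ρ => Nat.card ρ.Var)).bddAbove
  obtain ⟨k', hk', I, I', hQ, hnQ, hws⟩ := hinf k
  have hvars : ∀ ρ ∈ Prog, Finite ρ.Var ∧ Nat.card ρ.Var ≤ k' := fun ρ hρ =>
    ⟨hfv ρ hρ, le_trans (hk (Set.mem_image_of_mem _ hρ)) hk'⟩
  exact hnQ ((hdef I').mpr (preservation are σi ari Prog Goal k' I I' hvars hws ((hdef I).mp hQ)))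

end MonDet
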